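/- arXiv:2412.06766 — 2 statements merged into one kernel-verified Lean document; each statement's English description precedes it below -/
import Mathlib

section
/- The kernel R(u,u') = ∏_{k=1}^p min(u_k,u'_k) − ∏_{k=1}^p u_k u'_k − Σ_{l=1}^p (min(u_l,u'_l) − u_l u'_l) ∏_{k≠l} u_k u'_k on [0,1]^p × [0,1]^p is symmetric and positive semidefinite: for any finite collection u^{(1)},...,u^{(m)} ∈ [0,1]^p and real coefficients c₁,...,c_m, we have Σ_{i,j} c_i c_j R(u^{(i)}, u^{(j)}) ≥ 0. -/
open Finset MeasureTheory

noncomputable def Rker (p : ℕ) (u u' : Fin p → ℝ) : ℝ :=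
  (∏ k, min (u k) (u' k)) - (∏ k, u k * u' k)
    - ∑ l, (min (u l) (u' l) - u l * u' l) * ∏ k ∈ Finset.univ.erase l, u k * u' k

/-! ### Integral representation of the bridge kernel `min a b - a * b` -/

noncomputable def gfun (a : ℝ) (t : ℝ) : ℝ := Set.indicator (Set.Iic a) (fun _ => 1) t - a

local notation "μ01" => volume.restrict (Set.Ioc (0:ℝ) 1)

instance : IsFiniteMeasure (volume.restrict (Set.Ioc (0:ℝ) 1)) :=
  ⟨by rw [Measure.restrict_apply_univ, Real.volume_Ioc]; exact ENNReal.ofReal_lt_top⟩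

lemma int_ind (c : ℝ) (hc : c ∈ Set.Icc (0:ℝ) 1) :
    ∫ t, (Set.Iic c).indicator (fun _ => (1:ℝ)) t ∂μ01 = c := by
  rw [MeasureTheory.integral_indicator measurableSet_Iic, setIntegral_const,
    measureReal_restrict_apply measurableSet_Iic]
  have : Set.Iic c ∩ Set.Ioc (0:ℝ) 1 = Set.Ioc 0 c := by
    ext t
    simp only [Set.mem_inter_iff, Set.mem_Iic, Set.mem_Ioc]
    constructor
    · rintro ⟨h1, h2, h3⟩; exact ⟨h2, h1⟩
    · rintro ⟨h1, h2⟩; exact ⟨h2, h1, h2.trans hc.2⟩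
  rw [this, Real.volume_real_Ioc, max_eq_left (by linarith [hc.1])]
  simp

lemma gmul (a b t : ℝ) : gfun a t * gfun b t =
    (Set.Iic (min a b)).indicator (fun _ => (1:ℝ)) t
      - a * (Set.Iic b).indicator (fun _ => 1) t
      - b * (Set.Iic a).indicator (fun _ => 1) t + a * b := by
  by_cases h1 : t ≤ a <;> by_cases h2 : t ≤ b <;>
    simp [gfun, Set.indicator_apply, Set.mem_Iic, le_min_iff, h1, h2] <;> ring

lemma gg_integrable (a b : ℝ) : Integrable (fun t => gfun a t * gfun b t) μ01 := by
  have : (fun t => gfun a t * gfun b t) = fun t =>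
      (Set.Iic (min a b)).indicator (fun _ => (1:ℝ)) t
      - a * (Set.Iic b).indicator (fun _ => 1) t
      - b * (Set.Iic a).indicator (fun _ => 1) t + a * b := funext fun t => gmul a b t
  rw [this]
  exact ((((integrable_const (1:ℝ)).indicator measurableSet_Iic).sub
    (((integrable_const (1:ℝ)).indicator measurableSet_Iic).const_mul a)).sub
    (((integrable_const (1:ℝ)).indicator measurableSet_Iic).const_mul b)).add
    (integrable_const _)

lemma g_inner (a b : ℝ) (ha : a ∈ Set.Icc (0:ℝ) 1) (hb : b ∈ Set.Icc (0:ℝ) 1) :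
    ∫ t, gfun a t * gfun b t ∂μ01 = min a b - a * b := by
  simp_rw [gmul]
  rw [integral_add, integral_sub, integral_sub, integral_const_mul, integral_const_mul,
    int_ind a ha, int_ind b hb,
    int_ind (min a b) ⟨le_min ha.1 hb.1, (min_le_left a b).trans ha.2⟩, integral_const,
    measureReal_restrict_apply_univ, Real.volume_real_Ioc]
  · norm_num; ring
  · exact (integrable_const (1:ℝ)).indicator measurableSet_Iic
  · exact ((integrable_const (1:ℝ)).indicator measurableSet_Iic).const_mul a
  · exact (((integrable_const (1:ℝ)).indicator measurableSet_Iic).sub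
      (((integrable_const (1:ℝ)).indicator measurableSet_Iic).const_mul a))
  · exact ((integrable_const (1:ℝ)).indicator measurableSet_Iic).const_mul b
  · exact ((((integrable_const (1:ℝ)).indicator measurableSet_Iic).sub
      (((integrable_const (1:ℝ)).indicator measurableSet_Iic).const_mul a)).sub
      (((integrable_const (1:ℝ)).indicator measurableSet_Iic).const_mul b))
  · exact integrable_const _

lemma K_qf (m : ℕ) (a : Fin m → ℝ) (ha : ∀ i, a i ∈ Set.Icc (0:ℝ) 1) (c : Fin m → ℝ) :
    0 ≤ ∑ i, ∑ j, c i * c j * (min (a i) (a j) - a i * a j) := by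
  have key : ∑ i, ∑ j, c i * c j * (min (a i) (a j) - a i * a j)
      = ∫ t, (∑ i, c i * gfun (a i) t) ^ 2 ∂μ01 := by
    have h1 : ∀ t, (∑ i, c i * gfun (a i) t) ^ 2
        = ∑ i, ∑ j, (c i * c j) * (gfun (a i) t * gfun (a j) t) := by
      intro t
      rw [sq, Finset.sum_mul_sum]
      exact Finset.sum_congr rfl fun i _ => Finset.sum_congr rfl fun j _ => by ring
    simp_rw [h1]
    rw [integral_finset_sum _ fun i _ => integrable_finset_sum _ fun j _ =>
      ((gg_integrable (a i) (a j)).const_mul _)]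
    refine Finset.sum_congr rfl fun i _ => ?_
    rw [integral_finset_sum _ fun j _ => ((gg_integrable (a i) (a j)).const_mul _)]
    refine Finset.sum_congr rfl fun j _ => ?_
    rw [integral_const_mul, g_inner (a i) (a j) (ha i) (ha j)]
  rw [key]
  exact integral_nonneg fun t => sq_nonneg _

/-! ### Quadratic-form positivity machinery -/

def QF {m : ℕ} (M : Fin m → Fin m → ℝ) : Prop :=
  ∀ c : Fin m → ℝ, 0 ≤ ∑ i, ∑ j, c i * c j * M i j

def HasDecomp {m : ℕ} (M : Fin m → Fin m → ℝ) : Prop :=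
  ∃ (n : ℕ) (g : Fin n → Fin m → ℝ), ∀ i j, M i j = ∑ r, g r i * g r j

lemma QF.hadamard {m : ℕ} {A B : Fin m → Fin m → ℝ} (hA : QF A) (hB : HasDecomp B) :
    QF (fun i j => A i j * B i j) := by
  obtain ⟨n, g, hg⟩ := hB
  intro c
  have h1 : ∀ i j : Fin m, c i * c j * (A i j * B i j)
      = ∑ r : Fin n, (c i * g r i) * (c j * g r j) * A i j := by
    intro i j
    rw [hg i j, Finset.mul_sum, Finset.mul_sum]
    exact Finset.sum_congr rfl fun r _ => by ring
  calc (0:ℝ) ≤ ∑ r : Fin n, ∑ i, ∑ j, (c i * g r i) * (c j * g r j) * A i j :=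
        Finset.sum_nonneg fun r _ => hA _
    _ = ∑ i, ∑ r : Fin n, ∑ j, (c i * g r i) * (c j * g r j) * A i j := Finset.sum_comm
    _ = ∑ i, ∑ j, ∑ r : Fin n, (c i * g r i) * (c j * g r j) * A i j :=
        Finset.sum_congr rfl fun i _ => Finset.sum_comm
    _ = ∑ i, ∑ j, c i * c j * (A i j * B i j) :=
        Finset.sum_congr rfl fun i _ => Finset.sum_congr rfl fun j _ => (h1 i j).symm

lemma qf_prod {m p : ℕ} (M : Fin p → Fin m → Fin m → ℝ) (hM : ∀ k, HasDecomp (M k))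
    (s : Finset (Fin p)) : QF (fun i j => ∏ k ∈ s, M k i j) := by
  induction s using Finset.induction_on with
  | empty =>
    intro c
    simp only [Finset.prod_empty, mul_one]
    have : ∑ i, ∑ j, c i * c j = (∑ i, c i) ^ 2 := by
      rw [sq, Finset.sum_mul_sum]
    rw [this]; exact sq_nonneg _
  | insert a s ha ih =>
    have : (fun i j => ∏ k ∈ insert a s, M k i j)
        = fun i j => (∏ k ∈ s, M k i j) * M a i j := by
      funext i j
      rw [Finset.prod_insert ha, mul_comm]
    rw [this]
    exact ih.hadamard (hM a)

open scoped MatrixOrder in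
lemma decomp_of_qf {m : ℕ} {M : Fin m → Fin m → ℝ} (hsymm : ∀ i j, M i j = M j i)
    (hqf : QF M) : HasDecomp M := by
  set A : Matrix (Fin m) (Fin m) ℝ := Matrix.of M with hA
  have hH : A.IsHermitian := by
    ext i j
    simpa [Matrix.conjTranspose_apply, hA] using hsymm j i
  have hpsd : A.PosSemidef := by
    refine .of_dotProduct_mulVec_nonneg hH fun x => ?_
    have key : dotProduct (star x) (A.mulVec x) = ∑ i, ∑ j, x i * x j * M i j := by
      simp only [dotProduct, Matrix.mulVec, Pi.star_apply, star_trivial,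
        Finset.mul_sum, hA, Matrix.of_apply]
      exact Finset.sum_congr rfl fun i _ => Finset.sum_congr rfl fun j _ => by ring
    rw [key]; exact hqf x
  have hsymm' : ∀ r i, CFC.sqrt A r i = CFC.sqrt A i r := fun r i => by
    conv_lhs => rw [← (IsSelfAdjoint.of_nonneg (CFC.sqrt_nonneg A)).star_eq]
    simp only [Matrix.star_apply, star_trivial]
  refine ⟨m, fun r i => CFC.sqrt A r i, fun i j => ?_⟩
  have hsq : CFC.sqrt A * CFC.sqrt A = A := by
    have h2 := CFC.sq_sqrt A hpsd.nonneg
    rwa [sq] at h2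
  calc M i j = (CFC.sqrt A * CFC.sqrt A) i j := by rw [hsq]; rfl
    _ = ∑ r, CFC.sqrt A i r * CFC.sqrt A r j := Matrix.mul_apply
    _ = ∑ r, CFC.sqrt A r i * CFC.sqrt A r j :=
        Finset.sum_congr rfl fun r _ => by rw [hsymm' r i]

/-! ### Algebraic decomposition of `Rker` -/

lemma Rker_eq (p : ℕ) (u u' : Fin p → ℝ) :
    Rker p u u' = ∑ S ∈ Finset.univ.powerset.filter (fun S : Finset (Fin p) => 2 ≤ S.card),
      (∏ k ∈ S, (min (u k) (u' k) - u k * u' k)) * ∏ k ∈ Finset.univ \ S, (u k * u' k) := by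
  have hmin : ∀ k : Fin p, min (u k) (u' k)
      = (min (u k) (u' k) - u k * u' k) + u k * u' k := fun k => by ring
  have hexp : (∏ k, min (u k) (u' k))
      = ∑ S ∈ Finset.univ.powerset,
        (∏ k ∈ S, (min (u k) (u' k) - u k * u' k)) * ∏ k ∈ Finset.univ \ S, (u k * u' k) := by
    rw [Finset.prod_congr rfl fun k _ => hmin k]
    exact Finset.prod_add _ _ _
  set F : Finset (Fin p) → ℝ := fun S =>
    (∏ k ∈ S, (min (u k) (u' k) - u k * u' k)) * ∏ k ∈ Finset.univ \ S, (u k * u' k) with hF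
  have hsplit : ∑ S ∈ Finset.univ.powerset, F S
      = (∑ S ∈ Finset.univ.powerset.filter (fun S : Finset (Fin p) => 2 ≤ S.card), F S)
        + ∑ S ∈ Finset.univ.powerset.filter (fun S : Finset (Fin p) => ¬ 2 ≤ S.card), F S :=
    (Finset.sum_filter_add_sum_filter_not _ _ _).symm
  have hsmall : Finset.univ.powerset.filter (fun S : Finset (Fin p) => ¬ 2 ≤ S.card)
      = insert ∅ (Finset.univ.image fun l : Fin p => {l}) := by
    ext S
    simp only [Finset.mem_filter, Finset.mem_powerset, Finset.mem_insert, Finset.mem_image,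
      Finset.mem_univ, true_and, not_le]
    constructor
    · rintro ⟨-, hcard⟩
      interval_cases h : S.card
      · exact Or.inl (Finset.card_eq_zero.mp h)
      · obtain ⟨a, ha⟩ := Finset.card_eq_one.mp h
        exact Or.inr ⟨a, ha.symm⟩
    · rintro (rfl | ⟨a, rfl⟩)
      · simp
      · simp
  have hempty : F ∅ = ∏ k, u k * u' k := by
    simp [hF]
  have hsingle : ∀ l : Fin p, F {l}
      = (min (u l) (u' l) - u l * u' l) * ∏ k ∈ Finset.univ.erase l, u k * u' k := by
    intro l
    simp only [hF, Finset.prod_singleton]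
    congr 1
    apply Finset.prod_congr _ fun _ _ => rfl
    rw [Finset.sdiff_singleton_eq_erase]
  have hnotmem : (∅ : Finset (Fin p)) ∉ Finset.univ.image fun l : Fin p => {l} := by
    simp
  have hsum_small : ∑ S ∈ Finset.univ.powerset.filter
        (fun S : Finset (Fin p) => ¬ 2 ≤ S.card), F S
      = (∏ k, u k * u' k)
        + ∑ l, (min (u l) (u' l) - u l * u' l) * ∏ k ∈ Finset.univ.erase l, u k * u' k := by
    rw [hsmall, Finset.sum_insert hnotmem, hempty,
      Finset.sum_image (fun a _ b _ h => Finset.singleton_injective h)]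
    congr 1
    exact Finset.sum_congr rfl fun l _ => hsingle l
  have hs := hsplit
  rw [hsum_small] at hs
  rw [Rker, hexp, hs]
  ring

/-! ### Main theorem -/

/-- The kernel `R` on `[0,1]^p × [0,1]^p` is symmetric and positive semidefinite. -/
theorem stmt8 (p : ℕ) :
    (∀ u u' : Fin p → ℝ, Rker p u u' = Rker p u' u) ∧
    (∀ (m : ℕ) (u : Fin m → Fin p → ℝ), (∀ i k, u i k ∈ Set.Icc (0:ℝ) 1) →
      ∀ c : Fin m → ℝ, 0 ≤ ∑ i, ∑ j, c i * c j * Rker p (u i) (u j)) := by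
  constructor
  · intro u u'
    simp only [Rker]
    rw [Finset.prod_congr rfl fun k _ => min_comm (u k) (u' k),
      Finset.prod_congr rfl fun k _ => mul_comm (u k) (u' k)]
    congr 1
    refine Finset.sum_congr rfl fun l _ => ?_
    rw [min_comm (u l) (u' l), mul_comm (u l) (u' l),
      Finset.prod_congr rfl fun k _ => mul_comm (u k) (u' k)]
  · intro m u hu c
    -- kernels per coordinate
    set K : Fin p → Fin m → Fin m → ℝ :=
      fun k i j => min (u i k) (u j k) - u i k * u j k with hK
    set L : Fin p → Fin m → Fin m → ℝ := fun k i j => u i k * u j k with hL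
    have hKdec : ∀ k, HasDecomp (K k) := by
      intro k
      refine decomp_of_qf (fun i j => by simp [hK, min_comm, mul_comm]) ?_
      intro d
      simpa [hK] using K_qf m (fun i => u i k) (fun i => hu i k) d
    have hLdec : ∀ k, HasDecomp (L k) :=
      fun k => ⟨1, fun _ i => u i k, fun i j => by simp [hL]⟩
    -- per-subset positivity
    have hS : ∀ S : Finset (Fin p), ∀ d : Fin m → ℝ,
        0 ≤ ∑ i, ∑ j, d i * d j *
          ((∏ k ∈ S, K k i j) * ∏ k ∈ Finset.univ \ S, L k i j) := by
      intro S d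
      have hM : ∀ k, HasDecomp (fun i j => if k ∈ S then K k i j else L k i j) := by
        intro k
        by_cases hk : k ∈ S
        · simpa [hk] using hKdec k
        · simpa [hk] using hLdec k
      have := qf_prod (fun k i j => if k ∈ S then K k i j else L k i j) hM Finset.univ d
      have heq : ∀ i j : Fin m,
          (∏ k, if k ∈ S then K k i j else L k i j)
          = (∏ k ∈ S, K k i j) * ∏ k ∈ Finset.univ \ S, L k i j := by
        intro i j
        rw [← Finset.prod_sdiff (Finset.subset_univ S), mul_comm]
        congr 1
        · exact Finset.prod_congr rfl fun k hk => by simp [hk]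
        · exact Finset.prod_congr rfl fun k hk => by
            simp [(Finset.mem_sdiff.mp hk).2]
      simpa only [heq] using this
    -- assemble
    set filt := Finset.univ.powerset.filter (fun S : Finset (Fin p) => 2 ≤ S.card) with hfilt
    set A : Fin m → Fin m → Finset (Fin p) → ℝ := fun i j S =>
      c i * c j * ((∏ k ∈ S, K k i j) * ∏ k ∈ Finset.univ \ S, L k i j) with hA
    have hmain : ∑ i, ∑ j, c i * c j * Rker p (u i) (u j)
        = ∑ S ∈ filt, ∑ i, ∑ j, A i j S := by
      calc ∑ i, ∑ j, c i * c j * Rker p (u i) (u j)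
          = ∑ i, ∑ j, ∑ S ∈ filt, A i j S := by
            refine Finset.sum_congr rfl fun i _ => Finset.sum_congr rfl fun j _ => ?_
            rw [Rker_eq, Finset.mul_sum]
        _ = ∑ i, ∑ S ∈ filt, ∑ j, A i j S :=
            Finset.sum_congr rfl fun i _ => Finset.sum_comm
        _ = ∑ S ∈ filt, ∑ i, ∑ j, A i j S := Finset.sum_comm
    rw [hmain]
    exact Finset.sum_nonneg fun S _ => hS S c
end

section
/- Let F be a class of indicator functions f_{x,r}(y) = 1{d₁(x₁,y₁) ≤ r₁, ..., d_p(x_p,y_p) ≤ r_p} indexed by x ∈ Ω and r ∈ [0,∞)^p, on a product of metric spaces Ω = ∏ Ω_k with a probability measure μ on Ω. Suppose: (i) for each k, ε log N(ε, Ω_k, d_k) → 0 as ε ↓ 0, and (ii) the joint distance profiles are uniformly Lipschitz: there is L > 0 with |F_x(r) − F_x(r')| ≤ L‖r − r'‖ for all x and r, r', where F_x(r) = μ{y : d_k(x_k,y_k) ≤ r_k ∀k}. Then the bracketing numbers of F in L¹(μ) satisfy ε log N_[](ε, F, L¹(μ)) → 0 as ε ↓ 0. -/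
open MeasureTheory Metric Set
open scoped ENNReal

noncomputable def coveringNumber {M : Type*} [PseudoMetricSpace M] (ε : ℝ) (s : Set M) : ℕ∞ :=
  ⨅ (t : Finset M) (_ : s ⊆ ⋃ x ∈ t, Metric.closedBall x ε), (t.card : ℕ∞)

/-- The `L¹(μ)` bracketing number of a class of functions `F`: the minimal number of
`ε`-brackets `[l, u]` (pairs `l ≤ u` with `∫ (u - l) dμ < ε`) needed to cover `F`. -/
noncomputable def bracketingNumber {Ω : Type*} [MeasurableSpace Ω] (μ : Measure Ω)
    (F : Set (Ω → ℝ)) (ε : ℝ) : ℕ∞ :=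
  ⨅ (B : Finset ((Ω → ℝ) × (Ω → ℝ)))
    (_ : ∀ f ∈ F, ∃ b ∈ B, (∀ y, b.1 y ≤ f y) ∧ (∀ y, f y ≤ b.2 y) ∧
      ∫ y, (b.2 y - b.1 y) ∂μ < ε), (B.card : ℕ∞)

open Classical in
/-- The class of indicator functions of products of closed balls, which determines the
joint distance profiles. -/
noncomputable def profileClass {p : ℕ} (Ω : Fin p → Type*) [∀ k, MetricSpace (Ω k)] :
    Set ((∀ k, Ω k) → ℝ) :=
  {f | ∃ (x : ∀ k, Ω k) (r : Fin p → ℝ), (∀ k, 0 ≤ r k) ∧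
    f = fun y => if ∀ k, dist (x k) (y k) ≤ r k then (1:ℝ) else 0}

/- ### Auxiliary lemmas -/

lemma aux_log_nat_mono {a b : ℕ} (h : a ≤ b) : Real.log a ≤ Real.log b := by
  rcases Nat.eq_zero_or_pos a with ha | ha
  · subst ha; simpa using Real.log_natCast_nonneg b
  · exact Real.log_le_log (by exact_mod_cast ha) (by exact_mod_cast h)

lemma aux_coveringNumber_exists {M : Type*} [PseudoMetricSpace M] {ε : ℝ}
    (h : coveringNumber ε (univ : Set M) ≠ ⊤) :
    ∃ t : Finset M, (univ : Set M) ⊆ (⋃ x ∈ t, Metric.closedBall x ε) ∧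
      t.card ≤ (coveringNumber ε (univ : Set M)).toNat := by
  set c := coveringNumber ε (univ : Set M) with hc
  have hlt : c < c + 1 := by rw [ENat.lt_add_one_iff h]
  have h2 : (⨅ (t : Finset M) (_ : (univ : Set M) ⊆ ⋃ x ∈ t, Metric.closedBall x ε),
      (t.card : ℕ∞)) < c + 1 := hlt
  rw [iInf_lt_iff] at h2
  obtain ⟨t, ht⟩ := h2
  rw [iInf_lt_iff] at ht
  obtain ⟨hcov, hcard⟩ := ht
  refine ⟨t, hcov, ?_⟩
  have : (t.card : ℕ∞) ≤ c := by rwa [ENat.lt_add_one_iff h] at hcard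
  simpa using ENat.toNat_le_toNat this h

lemma aux_log_le_two_sqrt {x : ℝ} (hx : 0 < x) : Real.log x ≤ 2 * Real.sqrt x := by
  have h1 : Real.log (Real.sqrt x) ≤ Real.sqrt x - 1 :=
    Real.log_le_sub_one_of_pos (Real.sqrt_pos.2 hx)
  have h2 : Real.log x = 2 * Real.log (Real.sqrt x) := by
    rw [Real.log_sqrt hx.le]; ring
  nlinarith [Real.sqrt_nonneg x]

lemma aux_conclude {α : Type*} [MeasurableSpace α] (μ : Measure α) (F : Set (α → ℝ))
    {ε δ : ℝ} (hε : 0 < ε) (B : Finset ((α → ℝ) × (α → ℝ)))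
    (hB : ∀ f ∈ F, ∃ b ∈ B, (∀ y, b.1 y ≤ f y) ∧ (∀ y, f y ≤ b.2 y) ∧
      ∫ y, (b.2 y - b.1 y) ∂μ < ε)
    (hlog : ε * Real.log (B.card : ℝ) < δ) :
    bracketingNumber μ F ε ≠ ⊤ ∧
      ε * Real.log ((bracketingNumber μ F ε).toNat : ℝ) < δ := by
  have hle : bracketingNumber μ F ε ≤ (B.card : ℕ∞) :=
    (iInf_le _ B).trans (iInf_le _ hB)
  have hcoe : (B.card : ℕ∞) ≠ ⊤ := by simp
  constructor
  · intro htop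
    rw [htop] at hle
    exact hcoe (top_le_iff.mp hle)
  · have hnat : (bracketingNumber μ F ε).toNat ≤ B.card := by
      simpa using ENat.toNat_le_toNat hle (by simp)
    calc ε * Real.log ((bracketingNumber μ F ε).toNat : ℝ)
        ≤ ε * Real.log (B.card : ℝ) :=
          mul_le_mul_of_nonneg_left (aux_log_nat_mono hnat) hε.le
      _ < δ := hlog

section ProdBall

variable {p : ℕ} {Ω : Fin p → Type*} [∀ k, MetricSpace (Ω k)]
  [∀ k, MeasurableSpace (Ω k)] [∀ k, BorelSpace (Ω k)]

/-- Product of closed balls. -/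
def prodBall (z : ∀ k, Ω k) (r : Fin p → ℝ) : Set (∀ k, Ω k) :=
  {y | ∀ k, dist (z k) (y k) ≤ r k}

lemma measurableSet_prodBall (z : ∀ k, Ω k) (r : Fin p → ℝ) :
    MeasurableSet (prodBall z r) := by
  have : prodBall z r = ⋂ k, (fun y : ∀ k, Ω k => y k) ⁻¹' Metric.closedBall (z k) (r k) := by
    ext y
    simp [prodBall, Metric.mem_closedBall, dist_comm]
  rw [this]
  exact MeasurableSet.iInter fun k => (measurable_pi_apply k) measurableSet_closedBall

lemma integral_indicator_sub (μ : Measure (∀ k, Ω k)) [IsFiniteMeasure μ]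
    (z : ∀ k, Ω k) (r r' : Fin p → ℝ) :
    ∫ y, ((prodBall z r).indicator (fun _ => (1:ℝ)) y
        - (prodBall z r').indicator (fun _ => (1:ℝ)) y) ∂μ
      = (μ (prodBall z r)).toReal - (μ (prodBall z r')).toReal := by
  rw [integral_sub ((integrable_const (1:ℝ)).indicator (measurableSet_prodBall z r))
      ((integrable_const (1:ℝ)).indicator (measurableSet_prodBall z r')),
    integral_indicator_const (1:ℝ) (measurableSet_prodBall z r),
    integral_indicator_const (1:ℝ) (measurableSet_prodBall z r')]
  simp
  rfl

end ProdBall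

set_option maxHeartbeats 1000000 in
theorem stmt10 {p : ℕ} {Ω : Fin p → Type*} [∀ k, MetricSpace (Ω k)]
    [∀ k, MeasurableSpace (Ω k)] [∀ k, BorelSpace (Ω k)]
    (μ : Measure (∀ k, Ω k)) [IsProbabilityMeasure μ]
    (hcov : ∀ k, ∀ δ : ℝ, 0 < δ → ∃ ε₀ : ℝ, 0 < ε₀ ∧ ∀ ε ∈ Set.Ioc (0:ℝ) ε₀,
      coveringNumber ε (Set.univ : Set (Ω k)) ≠ ⊤ ∧
        ε * Real.log ((coveringNumber ε (Set.univ : Set (Ω k))).toNat : ℝ) < δ)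
    (L : ℝ) (hL : 0 < L)
    (hlip : ∀ (x : ∀ k, Ω k) (r r' : Fin p → ℝ),
      |(μ {y | ∀ k, dist (x k) (y k) ≤ r k}).toReal
          - (μ {y | ∀ k, dist (x k) (y k) ≤ r' k}).toReal|
        ≤ L * Real.sqrt (∑ k, (r k - r' k) ^ 2)) :
    ∀ δ : ℝ, 0 < δ → ∃ ε₀ : ℝ, 0 < ε₀ ∧ ∀ ε ∈ Set.Ioc (0:ℝ) ε₀,
      bracketingNumber μ (profileClass Ω) ε ≠ ⊤ ∧
        ε * Real.log ((bracketingNumber μ (profileClass Ω) ε).toNat : ℝ) < δ := by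
  classical
  intro δ hδ
  rcases Nat.eq_zero_or_pos p with hp | hp
  · -- degenerate case p = 0 : every f in the class is constant 1
    subst hp
    refine ⟨1, one_pos, fun ε hε => ?_⟩
    refine aux_conclude μ _ hε.1
      ({((fun _ => (1:ℝ)), (fun _ => (1:ℝ)))} : Finset ((((k : Fin 0) → Ω k) → ℝ) × (((k : Fin 0) → Ω k) → ℝ))) ?_ (by simp [hδ])
    rintro f ⟨x, r, hr, rfl⟩
    refine ⟨_, Finset.mem_singleton_self _, ?_, ?_, ?_⟩
    · intro y
      show (1:ℝ) ≤ if ∀ k, dist (x k) (y k) ≤ r k then (1:ℝ) else 0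
      rw [if_pos (fun k => k.elim0)]
    · intro y
      show (if ∀ k, dist (x k) (y k) ≤ r k then (1:ℝ) else 0) ≤ 1
      rw [if_pos (fun k => k.elim0)]
    · simpa using hε.1
  · -- main case p > 0
    haveI : Nonempty (Fin p) := Fin.pos_iff_nonempty.mp hp
    have hp1 : (1:ℝ) ≤ (p:ℝ) := by exact_mod_cast hp
    have hp0 : (0:ℝ) < (p:ℝ) := by linarith
    have hne : ∀ k, Nonempty (Ω k) := by
      intro k
      by_contra hk
      have hE : IsEmpty (∀ j, Ω j) := ⟨fun y => (not_nonempty_iff.mp hk).false (y k)⟩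
      have h1 : μ Set.univ = 1 := measure_univ
      rw [Set.univ_eq_empty_iff.mpr hE, measure_empty] at h1
      exact zero_ne_one h1
    -- uniform bound on distances
    have hCk : ∀ k, ∃ Ck : ℝ, ∀ a b : Ω k, dist a b ≤ Ck := by
      intro k
      obtain ⟨e0, he0, hcv⟩ := hcov k 1 one_pos
      obtain ⟨t, htcov, -⟩ := aux_coveringNumber_exists (hcv e0 ⟨he0, le_refl _⟩).1
      have hb : Bornology.IsBounded (univ : Set (Ω k)) := by
        refine Bornology.IsBounded.subset ?_ htcov
        exact (Bornology.isBounded_biUnion_finset t).2 fun x _ => Metric.isBounded_closedBall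
      obtain ⟨Ck, hCk⟩ := Metric.isBounded_iff.mp hb
      exact ⟨Ck, fun a b => hCk (mem_univ a) (mem_univ b)⟩
    choose Cf hCf using hCk
    set C : ℝ := ∑ k, max (Cf k) 0 with hC
    have hC0 : 0 ≤ C := Finset.sum_nonneg fun k _ => le_max_right _ _
    have hCb : ∀ k (a b : Ω k), dist a b ≤ C := by
      intro k a b
      calc dist a b ≤ Cf k := hCf k a b
        _ ≤ max (Cf k) 0 := le_max_left _ _
        _ ≤ C := Finset.single_le_sum (f := fun j => max (Cf j) 0)
            (fun j _ => le_max_right _ _) (Finset.mem_univ k)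
    -- parameters
    set c : ℝ := 4 * L * (p:ℝ) with hc
    have hc0 : 0 < c := by positivity
    have hδ₁ : (0:ℝ) < δ / (8 * L * (p:ℝ) ^ 2) := by positivity
    choose ε₀f hε₀f hcovf using fun k => hcov k (δ / (8 * L * (p:ℝ) ^ 2)) hδ₁
    set e : ℝ := Finset.univ.inf' Finset.univ_nonempty ε₀f with he
    have he0 : 0 < e := by
      rw [he, Finset.lt_inf'_iff]
      exact fun k _ => hε₀f k
    set K : ℝ := (C + 3) * c with hK
    have hK0 : 0 < K := mul_pos (by linarith) hc0
    set A : ℝ := 2 * (p:ℝ) * Real.sqrt K with hA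
    have hA0 : 0 ≤ A := by positivity
    set ε₂ : ℝ := (δ / (2 * A + 1)) ^ 2 with hε₂
    have hε₂0 : 0 < ε₂ := by positivity
    refine ⟨min (min c (c * e)) ε₂, lt_min (lt_min hc0 (mul_pos hc0 he0)) hε₂0, fun ε hε => ?_⟩
    obtain ⟨hε0, hεle⟩ := hε
    set η : ℝ := ε / c with hη
    have hη0 : 0 < η := div_pos hε0 hc0
    have hη1 : η ≤ 1 := by
      rw [hη, div_le_one hc0]
      exact hεle.trans ((min_le_left _ _).trans (min_le_left _ _))
    have hηe : ∀ k, η ≤ ε₀f k := by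
      intro k
      have h1 : ε ≤ c * e := hεle.trans ((min_le_left _ _).trans (min_le_right _ _))
      have h2 : η ≤ e := by
        rw [hη, div_le_iff₀ hc0, mul_comm]
        exact h1
      exact h2.trans (Finset.inf'_le _ (Finset.mem_univ k))
    have hεeq : ε = c * η := by
      rw [hη]; field_simp
    -- nets
    have hfin : ∀ k, coveringNumber η (univ : Set (Ω k)) ≠ ⊤ := fun k => (hcovf k η ⟨hη0, hηe k⟩).1
    have hlognet : ∀ k, η * Real.log ((coveringNumber η (univ : Set (Ω k))).toNat : ℝ)
        < δ / (8 * L * (p:ℝ) ^ 2) := fun k => (hcovf k η ⟨hη0, hηe k⟩).2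
    choose t htcov htcard using fun k => aux_coveringNumber_exists (hfin k)
    have hnet : ∀ k (x : Ω k), ∃ z ∈ t k, dist z x ≤ η := by
      intro k x
      have hx := htcov k (mem_univ x)
      simp only [mem_iUnion, Metric.mem_closedBall, exists_prop] at hx
      obtain ⟨z, hz, hd⟩ := hx
      exact ⟨z, hz, by rwa [dist_comm]⟩
    set m : ℕ := Nat.ceil (C / η) + 1 with hm
    -- the bracket family
    set B : Finset ((((k : Fin p) → Ω k) → ℝ) × (((k : Fin p) → Ω k) → ℝ)) :=
      Finset.image (fun zi : ((∀ k, Ω k) × (Fin p → ℕ)) =>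
        ((prodBall zi.1 (fun k => (zi.2 k : ℝ) * η - η)).indicator (fun _ => (1:ℝ)),
         (prodBall zi.1 (fun k => (zi.2 k : ℝ) * η + 2 * η)).indicator (fun _ => (1:ℝ))))
        ((Fintype.piFinset t) ×ˢ (Fintype.piFinset fun _ => Finset.range (m+1))) with hBdef
    -- width of each bracket
    have hsqrtp : Real.sqrt (p:ℝ) ≤ (p:ℝ) := by
      have h1 : Real.sqrt (p:ℝ) ≤ Real.sqrt ((p:ℝ)^2) := Real.sqrt_le_sqrt (by nlinarith)
      rwa [Real.sqrt_sq hp0.le] at h1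
    have hwidth : ∀ (z : ∀ k, Ω k) (i : Fin p → ℕ),
        ∫ y, ((prodBall z (fun k => (i k : ℝ) * η + 2*η)).indicator (fun _ => (1:ℝ)) y
          - (prodBall z (fun k => (i k : ℝ) * η - η)).indicator (fun _ => (1:ℝ)) y) ∂μ < ε := by
      intro z i
      rw [integral_indicator_sub μ z _ _]
      have h2 : ∑ k : Fin p, (((i k : ℝ) * η + 2*η) - ((i k : ℝ) * η - η))^2 = (p:ℝ) * (3*η)^2 := by
        rw [Finset.sum_congr rfl (fun k _ => by ring :
          ∀ k ∈ Finset.univ, (((i k : ℝ) * η + 2*η) - ((i k : ℝ) * η - η))^2 = (3*η)^2)]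
        rw [Finset.sum_const, Finset.card_univ, Fintype.card_fin, nsmul_eq_mul]
      calc (μ (prodBall z (fun k => (i k : ℝ) * η + 2*η))).toReal
            - (μ (prodBall z (fun k => (i k : ℝ) * η - η))).toReal
          ≤ L * Real.sqrt (∑ k : Fin p, (((i k : ℝ) * η + 2*η) - ((i k : ℝ) * η - η))^2) :=
            (le_abs_self _).trans
              (hlip z (fun k => (i k : ℝ) * η + 2*η) (fun k => (i k : ℝ) * η - η))
        _ = L * (Real.sqrt (p:ℝ) * (3*η)) := by
            rw [h2, Real.sqrt_mul (Nat.cast_nonneg p), Real.sqrt_sq (by positivity)]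
        _ ≤ L * ((p:ℝ) * (3*η)) := by
            apply mul_le_mul_of_nonneg_left _ hL.le
            exact mul_le_mul_of_nonneg_right hsqrtp (by positivity)
        _ < ε := by rw [hεeq, hc]; nlinarith [mul_pos (mul_pos hL hp0) hη0]
    -- the bracket covering property
    have hcover : ∀ f ∈ profileClass Ω, ∃ b ∈ B, (∀ y, b.1 y ≤ f y) ∧ (∀ y, f y ≤ b.2 y) ∧
        ∫ y, (b.2 y - b.1 y) ∂μ < ε := by
      rintro f ⟨x, r, hr, rfl⟩
      choose z hz hzd using fun k => hnet k (x k)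
      set i : Fin p → ℕ := fun k => min (Nat.floor (r k / η)) m with hi
      refine ⟨((prodBall z (fun k => (i k : ℝ) * η - η)).indicator (fun _ => (1:ℝ)),
        (prodBall z (fun k => (i k : ℝ) * η + 2 * η)).indicator (fun _ => (1:ℝ))),
        ?_, ?_, ?_, hwidth z i⟩
      · rw [hBdef]
        refine Finset.mem_image.2 ⟨(z, i), ?_, rfl⟩
        rw [Finset.mem_product]
        refine ⟨Fintype.mem_piFinset.2 hz, Fintype.mem_piFinset.2 fun k => ?_⟩
        exact Finset.mem_range.2 (Nat.lt_succ_of_le (min_le_right _ _))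
      · -- lower bracket
        intro y
        show (prodBall z (fun k => (i k : ℝ) * η - η)).indicator (fun _ => (1:ℝ)) y
          ≤ if ∀ k, dist (x k) (y k) ≤ r k then (1:ℝ) else 0
        by_cases hy : y ∈ prodBall z (fun k => (i k : ℝ) * η - η)
        · rw [Set.indicator_of_mem hy]
          have hmem : ∀ k, dist (x k) (y k) ≤ r k := by
            intro k
            have h1 : dist (x k) (y k) ≤ dist (x k) (z k) + dist (z k) (y k) := dist_triangle _ _ _
            have h2 : dist (z k) (y k) ≤ (i k : ℝ) * η - η := hy k
            have h3 : dist (x k) (z k) ≤ η := by rw [dist_comm]; exact hzd k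
            have h4 : ((i k : ℕ) : ℝ) ≤ r k / η := by
              calc ((i k : ℕ) : ℝ) ≤ (Nat.floor (r k / η) : ℝ) := Nat.cast_le.2 (min_le_left _ _)
                _ ≤ r k / η := Nat.floor_le (div_nonneg (hr k) hη0.le)
            have h5 : (i k : ℝ) * η ≤ r k := by
              calc (i k : ℝ) * η ≤ (r k / η) * η := mul_le_mul_of_nonneg_right h4 hη0.le
                _ = r k := by field_simp
            linarith
          rw [if_pos hmem]
        · rw [Set.indicator_of_notMem hy]
          split_ifs <;> norm_num
      · -- upper bracket
        intro y
        show (if ∀ k, dist (x k) (y k) ≤ r k then (1:ℝ) else 0)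
          ≤ (prodBall z (fun k => (i k : ℝ) * η + 2 * η)).indicator (fun _ => (1:ℝ)) y
        by_cases hall : ∀ k, dist (x k) (y k) ≤ r k
        · rw [if_pos hall]
          have hy : y ∈ prodBall z (fun k => (i k : ℝ) * η + 2 * η) := by
            show ∀ k, dist (z k) (y k) ≤ (i k : ℝ) * η + 2 * η
            intro k
            rcases le_or_gt (Nat.floor (r k / η)) m with hfm | hfm
            · have hik : i k = Nat.floor (r k / η) := min_eq_left hfm
              have h1 : dist (z k) (y k) ≤ dist (z k) (x k) + dist (x k) (y k) :=
                dist_triangle _ _ _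
              have h2 : r k < ((i k : ℝ) + 1) * η := by
                rw [hik]
                have hfl : r k / η < (Nat.floor (r k / η) : ℝ) + 1 := Nat.lt_floor_add_one _
                calc r k = (r k / η) * η := by field_simp
                  _ < ((Nat.floor (r k / η) : ℝ) + 1) * η := by
                      exact mul_lt_mul_of_pos_right hfl hη0
              have h3 : dist (z k) (x k) ≤ η := hzd k
              nlinarith [hall k]
            · have hik : i k = m := min_eq_right hfm.le
              have h1 : dist (z k) (y k) ≤ C := hCb k _ _
              have h2 : C ≤ (m:ℝ) * η := by
                have hce : C / η ≤ (Nat.ceil (C/η) : ℝ) := Nat.le_ceil _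
                have hmc : ((Nat.ceil (C/η) : ℕ) : ℝ) ≤ (m : ℝ) := by
                  rw [hm]; push_cast; linarith
                calc C = (C / η) * η := by field_simp
                  _ ≤ ((Nat.ceil (C/η) : ℕ) : ℝ) * η := mul_le_mul_of_nonneg_right hce hη0.le
                  _ ≤ (m:ℝ) * η := mul_le_mul_of_nonneg_right hmc hη0.le
              rw [hik]
              nlinarith
          rw [Set.indicator_of_mem hy]
        · rw [if_neg hall]
          exact Set.indicator_nonneg (fun _ _ => zero_le_one) y
    -- counting
    set N : Fin p → ℕ := fun k => (coveringNumber η (univ : Set (Ω k))).toNat with hN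
    have hN1 : ∀ k, 1 ≤ N k := by
      intro k
      refine le_trans ?_ (htcard k)
      obtain ⟨x⟩ := hne k
      have hx := htcov k (mem_univ x)
      simp only [mem_iUnion, exists_prop] at hx
      obtain ⟨w, hw, -⟩ := hx
      exact Finset.card_pos.2 ⟨w, hw⟩
    have hBcard : B.card ≤ (∏ k, N k) * (m+1)^p := by
      calc B.card ≤ ((Fintype.piFinset t) ×ˢ
            (Fintype.piFinset fun _ : Fin p => Finset.range (m+1))).card :=
            Finset.card_image_le
        _ = (∏ k, (t k).card) * (m+1)^p := by
            rw [Finset.card_product, Fintype.card_piFinset, Fintype.card_piFinset]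
            simp [Finset.card_range]
        _ ≤ (∏ k, N k) * (m+1)^p :=
            Nat.mul_le_mul_right _ (Finset.prod_le_prod' fun k _ => htcard k)
    have hNlog : Real.log (B.card : ℝ) ≤ (∑ k, Real.log (N k : ℝ))
        + (p:ℝ) * Real.log ((m:ℝ)+1) := by
      have h1 : Real.log (B.card : ℝ) ≤ Real.log (((∏ k, N k) * (m+1)^p : ℕ) : ℝ) :=
        aux_log_nat_mono hBcard
      have h2 : (((∏ k, N k) * (m+1)^p : ℕ) : ℝ) = (∏ k, (N k : ℝ)) * ((m:ℝ)+1)^p := by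
        push_cast; ring
      rw [h2] at h1
      have hprodpos : (0:ℝ) < ∏ k, (N k : ℝ) :=
        Finset.prod_pos fun k _ => by exact_mod_cast hN1 k
      have hNkpos : ∀ k : Fin p, ((N k : ℕ) : ℝ) ≠ 0 :=
        fun k => ne_of_gt (by exact_mod_cast hN1 k)
      rw [Real.log_mul hprodpos.ne' (by positivity),
        Real.log_prod (fun k _ => hNkpos k), Real.log_pow] at h1
      exact h1
    have hterm1 : ∑ k, ε * Real.log ((N k : ℕ) : ℝ) < δ/2 := by
      have hlt : ∀ k : Fin p, ε * Real.log ((N k : ℕ) : ℝ) < c * (δ/(8*L*(p:ℝ)^2)) := by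
        intro k
        rw [hεeq, mul_assoc]
        exact mul_lt_mul_of_pos_left (hlognet k) hc0
      calc ∑ k, ε * Real.log ((N k : ℕ) : ℝ)
          < ∑ _k : Fin p, c * (δ/(8*L*(p:ℝ)^2)) :=
            Finset.sum_lt_sum_of_nonempty Finset.univ_nonempty fun k _ => hlt k
        _ = (p:ℝ) * (c * (δ/(8*L*(p:ℝ)^2))) := by
            rw [Finset.sum_const, Finset.card_univ, Fintype.card_fin, nsmul_eq_mul]
        _ = δ/2 := by
            rw [hc]
            field_simp
            ring
    have hterm2 : ε * ((p:ℝ) * Real.log ((m:ℝ)+1)) < δ/2 := by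
      have hm1 : ((m:ℝ)+1) ≤ K / ε := by
        have h1 : ((Nat.ceil (C/η) : ℕ) : ℝ) < C/η + 1 :=
          Nat.ceil_lt_add_one (div_nonneg hC0 hη0.le)
        have h2 : (3:ℝ) ≤ 3/η := by
          rw [le_div_iff₀ hη0]; nlinarith
        have h3 : (m:ℝ) + 1 = ((Nat.ceil (C/η) : ℕ) : ℝ) + 2 := by
          rw [hm]; push_cast; ring
        have h5 : C/η + 3/η = K/ε := by
          rw [hK, hη, hc]
          field_simp
        linarith
      have hKε : (0:ℝ) < K/ε := div_pos hK0 hε0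
      have hlog2 : Real.log ((m:ℝ)+1) ≤ Real.log (K/ε) := Real.log_le_log (by positivity) hm1
      have hlog3 : Real.log (K/ε) ≤ 2 * Real.sqrt (K/ε) := aux_log_le_two_sqrt hKε
      have key : ε * ((p:ℝ) * (2 * Real.sqrt (K/ε))) = A * Real.sqrt ε := by
        rw [Real.sqrt_div hK0.le, hA]
        have hkey2 : ε * ((p:ℝ) * (2 * (Real.sqrt K / Real.sqrt ε)))
            = 2 * (p:ℝ) * Real.sqrt K * (ε / Real.sqrt ε) := by ring
        rw [hkey2, Real.div_sqrt]
      have h2A : (0:ℝ) < 2*A + 1 := by linarith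
      have hεs : Real.sqrt ε ≤ δ/(2*A+1) := by
        have hle2 : ε ≤ ε₂ := hεle.trans (min_le_right _ _)
        calc Real.sqrt ε ≤ Real.sqrt ε₂ := Real.sqrt_le_sqrt hle2
          _ = δ/(2*A+1) := by rw [hε₂, Real.sqrt_sq (div_pos hδ h2A).le]
      calc ε * ((p:ℝ) * Real.log ((m:ℝ)+1))
          ≤ ε * ((p:ℝ) * (2 * Real.sqrt (K/ε))) := by
            apply mul_le_mul_of_nonneg_left _ hε0.le
            exact mul_le_mul_of_nonneg_left (hlog2.trans hlog3) hp0.le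
        _ = A * Real.sqrt ε := key
        _ ≤ A * (δ/(2*A+1)) := mul_le_mul_of_nonneg_left hεs hA0
        _ < δ/2 := by
            rw [← mul_div_assoc, div_lt_div_iff₀ h2A two_pos]
            nlinarith
    refine aux_conclude μ _ hε0 B hcover ?_
    calc ε * Real.log (B.card : ℝ)
        ≤ ε * ((∑ k, Real.log ((N k : ℕ) : ℝ)) + (p:ℝ) * Real.log ((m:ℝ)+1)) :=
          mul_le_mul_of_nonneg_left hNlog hε0.le
      _ = (∑ k, ε * Real.log ((N k : ℕ) : ℝ)) + ε * ((p:ℝ) * Real.log ((m:ℝ)+1)) := by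
          rw [mul_add, Finset.mul_sum]
      _ < δ/2 + δ/2 := add_lt_add hterm1 hterm2
      _ = δ := by ring
end
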